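/- arXiv:2112.07810 — 2 statements merged into one kernel-verified Lean document; each statement's English description precedes it below -/
import Mathlib

section
/- Let T be a rooted phylogenetic X-tree whose positive edge lengths satisfy the ultrametric condition, and let A ⊆ X with |A| = k. Then PD_T(A) ≤ PD(T̂_k) + k·d_{k⁻}, where d_{k⁻} is the branching distance associated with the largest branching value k⁻ ≤ k, and T̂_k is the rooted subtree of the subdivided tree T′_k consisting of all vertices at distance at most d₁ − d_{k⁻} from the root (d₁ being the common root-to-leaf distance). -/
/-!
Rooted phylogenetic `X`-trees with positive edge lengths.

A tree on a finite vertex type `V` is encoded by its parent function: the root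
has no parent, every other vertex has one, and iterating the parent function
reaches the root.  The edge into a non-root vertex `v` has length `len v`, and
`hgt v` is the distance from the root to `v`.  Leaves are the vertices with no
children; the taxon set `X` of the paper is the set `leaves` of leaves.
Every non-leaf, non-root vertex has out-degree (number of children) at least 2.
-/

noncomputable section

attribute [local instance] Classical.propDecidable

structure PhyloTree (V : Type) [Fintype V] [DecidableEq V] where
  root : V
  parent : V → Option V
  len : V → ℝ
  hgt : V → ℝ
  parent_root : parent root = none
  parent_isSome : ∀ v, v ≠ root → (parent v).isSome
  reaches_root : ∀ v, Relation.ReflTransGen (fun a b => parent a = some b) v root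
  hgt_root : hgt root = 0
  hgt_eq : ∀ v u, parent v = some u → hgt v = hgt u + len v
  len_pos : ∀ v, v ≠ root → 0 < len v
  outdeg_ge_two : ∀ v, v ≠ root → (∃ u, parent u = some v) →
    2 ≤ Set.ncard {u | parent u = some v}

namespace PhyloTree

variable {V : Type} [Fintype V] [DecidableEq V]

/-- `T.step a b` : `b` is the parent of `a`. -/
def step (T : PhyloTree V) (a b : V) : Prop := T.parent a = some b

/-- `T.anc u v` : `u` is an ancestor of `v`, i.e. `u` lies on the (unique) path
from the root to `v` (reflexively). -/
def anc (T : PhyloTree V) (u v : V) : Prop := Relation.ReflTransGen T.step v u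

/-- a leaf is a vertex with no children. -/
def IsLeaf (T : PhyloTree V) (v : V) : Prop := ∀ u, T.parent u ≠ some v

/-- the leaf set (the taxon set `X`). -/
def leaves (T : PhyloTree V) : Set V := {v | T.IsLeaf v}

/-- Phylogenetic diversity of a set `Y`: the total length of all edges `e`
whose set of descendant leaves meets `Y` (the edge into a non-root vertex `v`
has length `T.len v`). -/
def PD (T : PhyloTree V) (Y : Set V) : ℝ :=
  ∑ v : V, if v ≠ T.root ∧ ∃ x ∈ Y, T.IsLeaf x ∧ T.anc v x then T.len v else 0

/-- the ultrametric condition: all leaves are at the same distance from the root. -/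
def Ultrametric (T : PhyloTree V) : Prop :=
  ∀ x y, T.IsLeaf x → T.IsLeaf y → T.hgt x = T.hgt y

/-- `R d`: the set of vertices within distance `d` above some leaf. -/
def R (T : PhyloTree V) (d : ℝ) : Set V :=
  {v | ∃ x, T.IsLeaf x ∧ T.anc v x ∧ T.hgt x - T.hgt v ≤ d}

/-- adjacency in the forest induced by `T` on a vertex set `S`. -/
def adjIn (T : PhyloTree V) (S : Set V) (u v : V) : Prop :=
  u ∈ S ∧ v ∈ S ∧ (T.parent u = some v ∨ T.parent v = some u)

/-- the connected components of the forest induced by `T` on `S`. -/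
def components (T : PhyloTree V) (S : Set V) : Set (Set V) :=
  {C | ∃ v ∈ S, C = S ∩ {u | Relation.ReflTransGen (T.adjIn S) v u}}

/-- `c d`: the number of connected components of the forest `T[R(d)]`. -/
def ccount (T : PhyloTree V) (d : ℝ) : ℕ := (T.components (T.R d)).ncard

/-- `k` is a branching value if `T[R(d)]` has exactly `k` components for some `d ≥ 0`. -/
def IsBranchingValue (T : PhyloTree V) (k : ℕ) : Prop := ∃ d : ℝ, 0 ≤ d ∧ T.ccount d = k

/-- the branching distance `d_k = min {d : c(d) = k}`. -/
def branchDist (T : PhyloTree V) (k : ℕ) : ℝ := sInf {d | 0 ≤ d ∧ T.ccount d = k}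

/-- `k⁻`: the largest branching value `≤ k`. -/
def kminus (T : PhyloTree V) (k : ℕ) : ℕ := sSup {j | j ≤ k ∧ T.IsBranchingValue j}

/-- `k⁺`: the smallest branching value `≥ k`. -/
def kplus (T : PhyloTree V) (k : ℕ) : ℕ := sInf {j | k ≤ j ∧ T.IsBranchingValue j}

/-- `A` is a size-`k` maxPD set. -/
def IsMaxPD (T : PhyloTree V) (k : ℕ) (A : Set V) : Prop :=
  A ⊆ T.leaves ∧ A.ncard = k ∧ ∀ Y ⊆ T.leaves, Y.ncard = k → T.PD Y ≤ T.PD A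

/-- `A` is a size-`k` minPD set. -/
def IsMinPD (T : PhyloTree V) (k : ℕ) (A : Set V) : Prop :=
  A ⊆ T.leaves ∧ A.ncard = k ∧ ∀ Y ⊆ T.leaves, Y.ncard = k → T.PD A ≤ T.PD Y

/-- `m T k`: the number of size-`k` maxPD sets of `T`. -/
def m (T : PhyloTree V) (k : ℕ) : ℕ := {A : Set V | T.IsMaxPD k A}.ncard

/-- `T` is binary: every non-leaf vertex has exactly two children. -/
def Binary (T : PhyloTree V) : Prop :=
  ∀ v, ¬ T.IsLeaf v → Set.ncard {u | T.parent u = some v} = 2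

end PhyloTree

namespace PhyloTree

variable {V : Type} [Fintype V] [DecidableEq V]

/-- `d₁`: the common root-to-leaf distance (for an ultrametric tree). -/
def rootLeafDist (T : PhyloTree V) : ℝ := sSup (T.hgt '' T.leaves)

/-- `PD(T̂)` where `T̂` is the subtree of the (suitably subdivided) tree
consisting of all points at distance at most `D` from the root:  each edge
`(u,v)` of `T` contributes the length of its portion lying within distance `D`
of the root, namely `min (hgt v) D - min (hgt u) D`. -/
def PDtrunc (T : PhyloTree V) (D : ℝ) : ℝ :=
  ∑ v : V, (T.parent v).elim 0 (fun u => min (T.hgt v) D - min (T.hgt u) D)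

/-- auxiliary: a vertex with a parent is not the root. -/
lemma step_ne_root (T : PhyloTree V) {a b : V} (h : T.step a b) : a ≠ T.root := by
  intro ha
  rw [ha] at h
  rw [PhyloTree.step, T.parent_root] at h
  cases h

lemma hgt_lt_of_step (T : PhyloTree V) {a b : V} (h : T.step a b) : T.hgt b < T.hgt a := by
  have h1 := T.hgt_eq a b h
  have h2 := T.len_pos a (T.step_ne_root h)
  linarith

lemma hgt_le_of_rtg (T : PhyloTree V) {u v : V}
    (h : Relation.ReflTransGen T.step u v) : T.hgt v ≤ T.hgt u := by
  induction h with
  | refl => exact le_rfl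
  | @tail b c _ hs ih => exact le_trans (T.hgt_lt_of_step hs).le ih

lemma eq_root_of_rtg_root (T : PhyloTree V) {w : V}
    (h : Relation.ReflTransGen T.step T.root w) : w = T.root := by
  rcases h.cases_head with h | ⟨c, hc, _⟩
  · exact h.symm
  · rw [PhyloTree.step, T.parent_root] at hc
    cases hc

/-- telescoping sum along the root-to-`x` path. -/
lemma tele (T : PhyloTree V) (F : ℝ → ℝ) (x : V) :
    ∑ w ∈ Finset.univ.filter (fun w => T.anc w x ∧ w ≠ T.root),
      (F (T.hgt w) - F ((T.parent w).elim 0 T.hgt))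
      = F (T.hgt x) - F (T.hgt T.root) := by
  induction T.reaches_root x using Relation.ReflTransGen.head_induction_on with
  | refl =>
      have hempty : Finset.univ.filter (fun w => T.anc w T.root ∧ w ≠ T.root) = ∅ := by
        ext w
        simp only [Finset.mem_filter, Finset.mem_univ, true_and, Finset.notMem_empty,
          iff_false, not_and]
        intro hw
        simpa using T.eq_root_of_rtg_root hw
      rw [hempty, Finset.sum_empty]
      ring
  | @head a c hs hrtg ih =>
      have hne : a ≠ T.root := T.step_ne_root hs
      have hset : Finset.univ.filter (fun w => T.anc w a ∧ w ≠ T.root)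
          = insert a (Finset.univ.filter (fun w => T.anc w c ∧ w ≠ T.root)) := by
        ext w
        simp only [Finset.mem_filter, Finset.mem_univ, true_and, Finset.mem_insert]
        constructor
        · rintro ⟨hw, hwne⟩
          rcases hw.cases_head with h | ⟨e, he, hrest⟩
          · exact Or.inl h.symm
          · have hec : e = c := by
              have h1 : T.parent a = some e := he
              have h2 : T.parent a = some c := hs
              rw [h1] at h2
              exact Option.some_injective _ h2
            exact Or.inr ⟨hec ▸ hrest, hwne⟩
        · rintro (rfl | ⟨hw, hwne⟩)
          · exact ⟨Relation.ReflTransGen.refl, hne⟩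
          · exact ⟨Relation.ReflTransGen.head hs hw, hwne⟩
      have hnotmem : a ∉ Finset.univ.filter (fun w => T.anc w c ∧ w ≠ T.root) := by
        simp only [Finset.mem_filter, Finset.mem_univ, true_and, not_and]
        intro hw
        exact absurd (T.hgt_le_of_rtg hw) (not_le.mpr (T.hgt_lt_of_step hs))
      rw [hset, Finset.sum_insert hnotmem, ih]
      have hpa : T.parent a = some c := hs
      rw [hpa]
      simp only [Option.elim_some]
      ring

end PhyloTree

/-- Lemma 1 of the paper.  For an ultrametric rooted
phylogenetic tree `T` and a set `A` of `k` leaves,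
`PD_T(A) ≤ PD(T̂_k) + k·d_{k⁻}`, where `T̂_k` is the part of the (subdivided)
tree within distance `d₁ − d_{k⁻}` of the root. -/
theorem pd_le_pdTop_add_k_mul_branchDist
    {V : Type} [Fintype V] [DecidableEq V] (T : PhyloTree V)
    (hU : T.Ultrametric) (A : Set V) (hA : A ⊆ T.leaves) (k : ℕ)
    (hcard : A.ncard = k) (hk : 1 ≤ k) :
    T.PD A ≤ T.PDtrunc (T.rootLeafDist - T.branchDist (T.kminus k))
              + k * T.branchDist (T.kminus k) := by
  classical
  set d := T.branchDist (T.kminus k) with hd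
  set D := T.rootLeafDist - d with hD
  have hd0 : 0 ≤ d := Real.sInf_nonneg (fun x hx => hx.1)
  -- all leaves are at height `rootLeafDist`
  have hleafhgt : ∀ x ∈ T.leaves, T.hgt x = T.rootLeafDist := by
    intro x hx
    have himg : T.hgt '' T.leaves = {T.hgt x} := by
      ext t
      constructor
      · rintro ⟨y, hy, rfl⟩
        exact hU y x hy hx
      · intro ht
        exact ⟨x, hx, (Set.mem_singleton_iff.mp ht).symm⟩
    rw [PhyloTree.rootLeafDist, himg, csSup_singleton]
  -- the "upper part" function f t = t - min t D, monotone and nonneg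
  have fnonneg : ∀ t : ℝ, 0 ≤ t - min t D := by
    intro t; have := min_le_left t D; linarith
  have fmono : ∀ a b : ℝ, a ≤ b → a - min a D ≤ b - min b D := by
    intro a b hab
    rcases le_total a D with h | h
    · rw [min_eq_left h]
      have := min_le_left b D
      linarith
    · rw [min_eq_right h, min_eq_right (le_trans h hab)]
      linarith
  -- parent height
  have hpg : ∀ v : V, (T.parent v).elim 0 T.hgt ≤ T.hgt v := by
    intro v
    cases hv : T.parent v with
    | none =>
        have hvroot : v = T.root := by
          by_contra hne
          have := T.parent_isSome v hne
          rw [hv] at this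
          simp at this
        simp [hvroot, T.hgt_root]
    | some u =>
        simp only [Option.elim_some]
        exact (T.hgt_lt_of_step (show T.step v u from hv)).le
  set Rel : V → Prop := fun v => v ≠ T.root ∧ ∃ x ∈ A, T.IsLeaf x ∧ T.anc v x with hRel
  -- Step 1: split PD into truncated part + upper part
  have step1 : T.PD A ≤ T.PDtrunc D
      + ∑ v : V, (if Rel v then
          (T.hgt v - min (T.hgt v) D)
            - ((T.parent v).elim 0 T.hgt - min ((T.parent v).elim 0 T.hgt) D) else 0) := by
    rw [PhyloTree.PD, PhyloTree.PDtrunc, ← Finset.sum_add_distrib]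
    apply Finset.sum_le_sum
    intro v _
    by_cases h : Rel v
    · rw [if_pos h, if_pos h]
      obtain ⟨hvne, _⟩ := h
      have hsome := T.parent_isSome v hvne
      obtain ⟨u, hu⟩ := Option.isSome_iff_exists.mp hsome
      rw [hu]
      simp only [Option.elim_some]
      have hlen := T.hgt_eq v u hu
      linarith
    · rw [if_neg h, if_neg h, add_zero]
      cases hv : T.parent v with
      | none => simp
      | some u =>
          simp only [Option.elim_some]
          have := (T.hgt_lt_of_step (show T.step v u from hv)).le
          have : min (T.hgt u) D ≤ min (T.hgt v) D := min_le_min this le_rfl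
          linarith
  refine le_trans step1 ?_
  have step2 : ∑ v : V, (if Rel v then
          (T.hgt v - min (T.hgt v) D)
            - ((T.parent v).elim 0 T.hgt - min ((T.parent v).elim 0 T.hgt) D) else 0)
      ≤ (k : ℝ) * d := by
    set F : ℝ → ℝ := fun t => t - min t D with hF
    set Δ : V → ℝ := fun v => F (T.hgt v) - F ((T.parent v).elim 0 T.hgt) with hΔ
    have hΔnonneg : ∀ v, 0 ≤ Δ v := by
      intro v
      have := fmono _ _ (hpg v)
      simpa [hΔ, hF] using this
    have hrw : ∑ v : V, (if Rel v then
          (T.hgt v - min (T.hgt v) D)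
            - ((T.parent v).elim 0 T.hgt - min ((T.parent v).elim 0 T.hgt) D) else 0)
        = ∑ v ∈ Finset.univ.filter Rel, Δ v := by
      rw [Finset.sum_filter]
    rw [hrw]
    -- assign to each relevant vertex a witness leaf in A
    set φ : V → V := fun v =>
      if h : ∃ x ∈ A, T.IsLeaf x ∧ T.anc v x then h.choose else v with hφ
    have hφspec : ∀ v, Rel v → φ v ∈ A ∧ T.IsLeaf (φ v) ∧ T.anc v (φ v) := by
      intro v hv
      obtain ⟨_, hex⟩ := hv
      simp only [hφ, dif_pos hex]
      exact hex.choose_spec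
    set A' : Finset V := Finset.univ.filter (· ∈ A) with hA'
    have hA'mem : ∀ x, x ∈ A' ↔ x ∈ A := by
      intro x; simp [hA']
    have hA'card : A'.card = k := by
      rw [← hcard, Set.ncard_eq_toFinset_card']
      congr 1
      ext x
      simp [hA']
    have hmaps : ∀ v ∈ Finset.univ.filter Rel, φ v ∈ A' := by
      intro v hv
      rw [Finset.mem_filter] at hv
      exact (hA'mem _).mpr (hφspec v hv.2).1
    rw [← Finset.sum_fiberwise_of_maps_to hmaps Δ]
    have hinner : ∀ x ∈ A',
        ∑ v ∈ (Finset.univ.filter Rel).filter (fun v => φ v = x), Δ v ≤ d := by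
      intro x hx
      have hxA : x ∈ A := (hA'mem x).mp hx
      have hxleaf : T.IsLeaf x := hA hxA
      have hsub : (Finset.univ.filter Rel).filter (fun v => φ v = x)
          ⊆ Finset.univ.filter (fun w => T.anc w x ∧ w ≠ T.root) := by
        intro v hv
        simp only [Finset.mem_filter, Finset.mem_univ, true_and] at hv ⊢
        obtain ⟨hrel, hfv⟩ := hv
        refine ⟨?_, hrel.1⟩
        have := (hφspec v hrel).2.2
        rwa [hfv] at this
      have hle : ∑ v ∈ (Finset.univ.filter Rel).filter (fun v => φ v = x), Δ v
          ≤ ∑ w ∈ Finset.univ.filter (fun w => T.anc w x ∧ w ≠ T.root), Δ w :=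
        Finset.sum_le_sum_of_subset_of_nonneg hsub (fun w _ _ => hΔnonneg w)
      refine le_trans hle ?_
      have htele := T.tele F x
      have : ∑ w ∈ Finset.univ.filter (fun w => T.anc w x ∧ w ≠ T.root), Δ w
          = F (T.hgt x) - F (T.hgt T.root) := htele
      rw [this]
      have hFx : F (T.hgt x) = d := by
        rw [hleafhgt x hxleaf, hF]
        simp only
        rw [hD, min_eq_right (by linarith)]
        ring
      have hF0 : 0 ≤ F (T.hgt T.root) := fnonneg _
      linarith
    calc ∑ x ∈ A', ∑ v ∈ (Finset.univ.filter Rel).filter (fun v => φ v = x), Δ v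
        ≤ ∑ _x ∈ A', d := Finset.sum_le_sum hinner
      _ = (k : ℝ) * d := by rw [Finset.sum_const, hA'card, nsmul_eq_mul]
  linarith
end
end

section
/- Let T be a rooted phylogenetic X-tree whose positive edge lengths satisfy the ultrametric condition, let A ⊆ X with |A| = k, and let d be a branching distance of T. If one connected component of the forest T[R(d)] contains no member of A while a second component of T[R(d)] contains two or more distinct members of A, then A is not a size-k maxPD set. -/
/-!
Rooted phylogenetic `X`-trees with positive edge lengths.

A tree on a finite vertex type `V` is encoded by its parent function: the root
has no parent, every other vertex has one, and iterating the parent function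
reaches the root.  The edge into a non-root vertex `v` has length `len v`, and
`hgt v` is the distance from the root to `v`.  Leaves are the vertices with no
children; the taxon set `X` of the paper is the set `leaves` of leaves.
Every non-leaf, non-root vertex has out-degree (number of children) at least 2.
-/

noncomputable section

attribute [local instance] Classical.propDecidable

namespace PhyloTree

variable {V : Type} [Fintype V] [DecidableEq V] (T : PhyloTree V)

lemma ne_root_of_step {a b : V} (h : T.step a b) : a ≠ T.root := by
  intro e
  rw [e] at h
  rw [step, T.parent_root] at h
  cases h

lemma hgt_le_of_anc {u v : V} (h : T.anc u v) : T.hgt u ≤ T.hgt v := by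
  induction h with
  | refl => exact le_refl _
  | tail hb hstep ih =>
    have h1 := T.hgt_eq _ _ hstep
    have h2 := T.len_pos _ (T.ne_root_of_step hstep)
    linarith

lemma hgt_lt_of_anc {u v : V} (h : T.anc u v) (hne : u ≠ v) : T.hgt u < T.hgt v := by
  rcases h.cases_head with h | ⟨c, hc, hcu⟩
  · exact absurd h.symm hne
  · have h1 := T.hgt_eq _ _ hc
    have h2 := T.len_pos _ (T.ne_root_of_step hc)
    have h3 := T.hgt_le_of_anc (u := u) (v := c) hcu
    linarith

lemma anc_trans {a b c : V} (h1 : T.anc a b) (h2 : T.anc b c) : T.anc a c :=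
  Relation.ReflTransGen.trans h2 h1

lemma anc_antisymm {a b : V} (h1 : T.anc a b) (h2 : T.anc b a) : a = b := by
  by_contra hne
  have := T.hgt_lt_of_anc h1 hne
  have := T.hgt_lt_of_anc h2 (Ne.symm hne)
  linarith

lemma anc_total {v a b : V} (h1 : Relation.ReflTransGen T.step v a) :
    Relation.ReflTransGen T.step v b → T.anc a b ∨ T.anc b a := by
  induction h1 using Relation.ReflTransGen.head_induction_on with
  | refl => exact fun h2 => Or.inr h2
  | head h' h ih =>
    intro h2
    rcases h2.cases_head with rfl | ⟨c', hs, ht⟩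
    · exact Or.inl (Relation.ReflTransGen.head h' h)
    · have : c' = _ := Option.some.inj (hs.symm.trans h')
      exact ih (this ▸ ht)

lemma ne_root_of_strict_anc {w p : V} (h : T.anc w p) (hne : p ≠ w) : p ≠ T.root := by
  rcases (h : Relation.ReflTransGen T.step p w).cases_head with h' | ⟨c, hc, _⟩
  · exact absurd h' hne
  · exact T.ne_root_of_step hc

lemma path_sum {w v : V} (h : T.anc w v) :
    ∑ p ∈ Finset.univ.filter (fun p => T.anc w p ∧ T.anc p v ∧ p ≠ w), T.len p
      = T.hgt v - T.hgt w := by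
  induction h using Relation.ReflTransGen.head_induction_on with
  | refl =>
    rw [Finset.sum_eq_zero, sub_self]
    intro p hp
    simp only [Finset.mem_filter] at hp
    exact absurd (T.anc_antisymm hp.2.2.1 hp.2.1) hp.2.2.2
  | @head v c h' hc ih =>
    have hvc : T.hgt v = T.hgt c + T.len v := T.hgt_eq _ _ h'
    have hvne : v ≠ w := by
      have h2 := T.len_pos _ (T.ne_root_of_step h')
      have h3 := T.hgt_le_of_anc hc
      intro e
      rw [← e] at h3
      linarith
    have hset : Finset.univ.filter (fun p => T.anc w p ∧ T.anc p v ∧ p ≠ w)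
        = insert v (Finset.univ.filter (fun p => T.anc w p ∧ T.anc p c ∧ p ≠ w)) := by
      ext p
      simp only [Finset.mem_insert, Finset.mem_filter, Finset.mem_univ, true_and]
      constructor
      · rintro ⟨hwp, hpv, hpw⟩
        rcases (hpv : Relation.ReflTransGen T.step v p).cases_head with rfl | ⟨c', hc', ht⟩
        · exact Or.inl rfl
        · have : c' = c := Option.some.inj (hc'.symm.trans h')
          exact Or.inr ⟨hwp, this ▸ ht, hpw⟩
      · rintro (rfl | ⟨hwp, hpc, hpw⟩)
        · exact ⟨Relation.ReflTransGen.head h' hc, Relation.ReflTransGen.refl, hvne⟩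
        · exact ⟨hwp, Relation.ReflTransGen.head h' hpc, hpw⟩
    have hvnotin : v ∉ Finset.univ.filter (fun p => T.anc w p ∧ T.anc p c ∧ p ≠ w) := by
      simp only [Finset.mem_filter, Finset.mem_univ, true_and]
      rintro ⟨_, hvc', _⟩
      have := T.hgt_le_of_anc hvc'
      have := T.len_pos _ (T.ne_root_of_step h')
      linarith
    rw [hset, Finset.sum_insert hvnotin, ih]
    linarith

lemma connect_down {d : ℝ} {z p : V} (hz : T.IsLeaf z)
    (h : Relation.ReflTransGen T.step z p) :
    T.hgt z - T.hgt p ≤ d → Relation.ReflTransGen (T.adjIn (T.R d)) p z := by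
  induction h with
  | refl => exact fun _ => Relation.ReflTransGen.refl
  | @tail b p hzb h' ih =>
    intro hd
    have hbp : T.hgt b = T.hgt p + T.len b := T.hgt_eq _ _ h'
    have hlb := T.len_pos _ (T.ne_root_of_step h')
    have hb : T.hgt z - T.hgt b ≤ d := by linarith
    have hbz := ih hb
    have hpR : p ∈ T.R d := ⟨z, hz, hzb.tail h', hd⟩
    have hbR : b ∈ T.R d := ⟨z, hz, hzb, hb⟩
    exact Relation.ReflTransGen.head ⟨hpR, hbR, Or.inr h'⟩ hbz

lemma adjIn_symm (S : Set V) : Symmetric (T.adjIn S) := by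
  rintro a b ⟨ha, hb, h⟩
  exact ⟨hb, ha, h.symm⟩

lemma common_anc {S : Set V} {a b : V} (ha : a ∈ S)
    (h : Relation.ReflTransGen (T.adjIn S) a b) :
    ∃ c ∈ S, T.anc c a ∧ T.anc c b := by
  induction h with
  | refl => exact ⟨a, ha, Relation.ReflTransGen.refl, Relation.ReflTransGen.refl⟩
  | @tail m b hm hadj ih =>
    obtain ⟨c, hcS, hca, hcm⟩ := ih
    obtain ⟨hmS, hbS, hor⟩ := hadj
    rcases hor with h' | h'
    · -- parent m = some b : b is ancestor of m
      have hbm : T.anc b m := Relation.ReflTransGen.single h'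
      rcases T.anc_total (v := m) (a := c) (b := b) hcm hbm with hcb | hbc
      · exact ⟨c, hcS, hca, hcb⟩
      · exact ⟨b, hbS, T.anc_trans hbc hca, Relation.ReflTransGen.refl⟩
    · -- parent b = some m : m is ancestor of b
      have hmb : T.anc m b := Relation.ReflTransGen.single h'
      exact ⟨c, hcS, hca, T.anc_trans hcm hmb⟩

lemma PD_eq_sum_filter (S : Set V) :
    T.PD S = ∑ v ∈ Finset.univ.filter
      (fun v => v ≠ T.root ∧ ∃ x ∈ S, T.IsLeaf x ∧ T.anc v x), T.len v := by
  rw [PD, Finset.sum_filter]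

end PhyloTree

/-- Lemma 2 of the paper.  If, for a branching distance `d`,
one component of `T[R(d)]` contains no member of `A` while another component of
`T[R(d)]` contains two or more distinct members of `A`, then `A` is not a
size-`k` maxPD set. -/
theorem not_isMaxPD_of_empty_component_and_crowded_component
    {V : Type} [Fintype V] [DecidableEq V] (T : PhyloTree V)
    (hU : T.Ultrametric) (A : Set V) (hA : A ⊆ T.leaves) (k : ℕ)
    (hcard : A.ncard = k) (d : ℝ)
    (hd : ∃ j : ℕ, T.IsBranchingValue j ∧ d = T.branchDist j)
    (C₁ C₂ : Set V)
    (hC₁ : C₁ ∈ T.components (T.R d)) (hC₂ : C₂ ∈ T.components (T.R d))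
    (hempty : A ∩ C₁ = ∅)
    (hcrowded : ∃ x ∈ A ∩ C₂, ∃ y ∈ A ∩ C₂, x ≠ y) :
    ¬ T.IsMaxPD k A := by
  obtain ⟨x0, hx0, y0, hy0, hxy0⟩ := hcrowded
  obtain ⟨x0A, x0C⟩ := hx0
  obtain ⟨y0A, y0C⟩ := hy0
  obtain ⟨v₁, hv₁R, hC₁eq⟩ := hC₁
  obtain ⟨v₂, hv₂R, hC₂eq⟩ := hC₂
  have hy0leaf : T.IsLeaf y0 := hA y0A
  have hx0leaf : T.IsLeaf x0 := hA x0A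
  have hAempty : ∀ a ∈ A, a ∉ C₁ := by
    intro a haA haC
    have : a ∈ A ∩ C₁ := ⟨haA, haC⟩
    rw [hempty] at this
    exact this
  -- choose a leaf z in C₁
  obtain ⟨z, hzleaf, hzanc, hzd⟩ := hv₁R
  have hd0 : 0 ≤ d := by
    have := T.hgt_le_of_anc hzanc
    linarith
  have hzR : z ∈ T.R d := ⟨z, hzleaf, Relation.ReflTransGen.refl, by linarith⟩
  have hzreach : Relation.ReflTransGen (T.adjIn (T.R d)) v₁ z :=
    T.connect_down hzleaf hzanc hzd
  have hzC₁ : z ∈ C₁ := by rw [hC₁eq]; exact ⟨hzR, hzreach⟩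
  have hzA : z ∉ A := fun hz => hAempty z hz hzC₁
  have hzy0 : T.hgt z = T.hgt y0 := hU z y0 hzleaf hy0leaf
  have hsym : Symmetric (Relation.ReflTransGen (T.adjIn (T.R d))) :=
    fun a b h => (@Relation.ReflTransGen.stdSymm _ _ ⟨fun x y => @T.adjIn_symm _ _ _ _ x y⟩).symm a b h
  -- common ancestor w of y0 and x0 inside R d
  have hy0mem := hC₂eq ▸ y0C
  have hx0mem := hC₂eq ▸ x0C
  obtain ⟨hy0R, hy0reach⟩ := hy0mem
  obtain ⟨hx0R, hx0reach⟩ := hx0mem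
  have hy0x0 : Relation.ReflTransGen (T.adjIn (T.R d)) y0 x0 :=
    (hsym hy0reach).trans hx0reach
  obtain ⟨w, hwR, hwy, hwx⟩ := T.common_anc hy0R hy0x0
  have hwd : T.hgt y0 - T.hgt w ≤ d := by
    obtain ⟨z', hz'leaf, _, hz'd⟩ := hwR
    have : T.hgt z' = T.hgt y0 := hU z' y0 hz'leaf hy0leaf
    linarith
  -- deepest ancestor u of z having a leaf descendant in A
  obtain ⟨u, huS, humax⟩ := Finset.exists_max_image
    (Finset.univ.filter (fun p => T.anc p z ∧ ∃ a ∈ A, T.IsLeaf a ∧ T.anc p a)) T.hgt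
    ⟨T.root, by
      simp only [Finset.mem_filter, Finset.mem_univ, true_and]
      exact ⟨T.reaches_root z, y0, y0A, hy0leaf, T.reaches_root y0⟩⟩
  simp only [Finset.mem_filter, Finset.mem_univ, true_and] at huS
  obtain ⟨huz, a, haA, haleaf, hua⟩ := huS
  -- u ∉ R d
  have huR : u ∉ T.R d := by
    intro huR
    have hud : T.hgt z - T.hgt u ≤ d := by
      obtain ⟨z', hz'leaf, _, hz'd⟩ := huR
      have h1 : T.hgt z' = T.hgt y0 := hU z' y0 hz'leaf hy0leaf
      linarith
    have huzc : Relation.ReflTransGen (T.adjIn (T.R d)) u z :=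
      T.connect_down hzleaf huz hud
    have huad : T.hgt a - T.hgt u ≤ d := by
      have : T.hgt a = T.hgt y0 := hU a y0 haleaf hy0leaf
      linarith
    have huac : Relation.ReflTransGen (T.adjIn (T.R d)) u a :=
      T.connect_down haleaf hua huad
    have haC₁ : a ∈ C₁ := by
      rw [hC₁eq]
      refine ⟨⟨a, haleaf, Relation.ReflTransGen.refl, by linarith⟩, ?_⟩
      exact (hzreach.trans (hsym huzc)).trans huac
    exact hAempty a haA haC₁
  have hud : d < T.hgt z - T.hgt u := by
    by_contra h'
    exact huR ⟨z, hzleaf, huz, by linarith⟩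
  -- the swap set Y
  set Y : Set V := insert z (A \ {y0}) with hY
  have hzAd : z ∉ A \ {y0} := fun h => hzA h.1
  have hYcard : Y.ncard = k := by
    rw [hY, Set.ncard_insert_of_notMem hzAd, Set.ncard_diff_singleton_add_one y0A, hcard]
  have hYsub : Y ⊆ T.leaves := by
    rintro p (rfl | hp)
    · exact hzleaf
    · exact hA hp.1
  -- PD comparison
  have hPD : T.PD A < T.PD Y := by
    obtain ⟨FA, hPDA, hFA⟩ : ∃ F, T.PD A = ∑ v ∈ F, T.len v ∧
        F = Finset.univ.filter (fun v => v ≠ T.root ∧ ∃ x ∈ A, T.IsLeaf x ∧ T.anc v x) :=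
      ⟨_, T.PD_eq_sum_filter A, Finset.filter_congr_decidable _ _ _⟩
    obtain ⟨FY, hPDY, hFY⟩ : ∃ F, T.PD Y = ∑ v ∈ F, T.len v ∧
        F = Finset.univ.filter (fun v => v ≠ T.root ∧ ∃ x ∈ Y, T.IsLeaf x ∧ T.anc v x) :=
      ⟨_, T.PD_eq_sum_filter Y, Finset.filter_congr_decidable _ _ _⟩
    set Px := Finset.univ.filter (fun p => T.anc u p ∧ T.anc p z ∧ p ≠ u) with hPx
    set Pw := Finset.univ.filter (fun p => T.anc w p ∧ T.anc p y0 ∧ p ≠ w) with hPw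
    have hPxsub : Px ⊆ FY \ FA := by
      intro p hp
      rw [hPx, Finset.mem_filter] at hp
      obtain ⟨_, hup, hpz, hpu⟩ := hp
      have hproot : p ≠ T.root := T.ne_root_of_strict_anc hup hpu
      rw [Finset.mem_sdiff, hFY, hFA, Finset.mem_filter, Finset.mem_filter]
      refine ⟨⟨Finset.mem_univ _, hproot, z, Set.mem_insert _ _, hzleaf, hpz⟩, ?_⟩
      intro hpFA
      obtain ⟨_, _, a', ha'A, ha'leaf, hpa'⟩ := hpFA
      have hpmem : p ∈ Finset.univ.filter
          (fun q => T.anc q z ∧ ∃ b ∈ A, T.IsLeaf b ∧ T.anc q b) := by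
        simp only [Finset.mem_filter, Finset.mem_univ, true_and]
        exact ⟨hpz, a', ha'A, ha'leaf, hpa'⟩
      have h1 := humax p hpmem
      have h2 := T.hgt_lt_of_anc hup (Ne.symm hpu)
      linarith
    have hPwsub : FA \ FY ⊆ Pw := by
      intro v hv
      obtain ⟨hvFA, hvFY⟩ := Finset.mem_sdiff.mp hv
      rw [hFA, Finset.mem_filter] at hvFA
      rw [hFY] at hvFY
      obtain ⟨_, hvroot, a', ha'A, ha'leaf, hva'⟩ := hvFA
      have hnY' : ∀ x ∈ Y, T.IsLeaf x → ¬ T.anc v x := by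
        intro x hx hleaf hanc
        exact hvFY (Finset.mem_filter.mpr ⟨Finset.mem_univ _, hvroot, x, hx, hleaf, hanc⟩)
      have ha'y0 : a' = y0 := by
        by_contra hne
        exact hnY' a' (Set.mem_insert_of_mem _ ⟨ha'A, hne⟩) ha'leaf hva'
      have hvy0 : T.anc v y0 := ha'y0 ▸ hva'
      have hx0Y : x0 ∈ Y := Set.mem_insert_of_mem _ ⟨x0A, hxy0⟩
      have hvx0 : ¬ T.anc v x0 := fun hc => hnY' x0 hx0Y hx0leaf hc
      have hvw : T.anc w v := by
        rcases T.anc_total (v := y0) (a := v) (b := w) hvy0 hwy with hvw' | hwv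
        · exact absurd (T.anc_trans hvw' hwx) hvx0
        · exact hwv
      have hvnw : v ≠ w := by
        rintro rfl
        exact hvx0 hwx
      rw [hPw, Finset.mem_filter]
      exact ⟨Finset.mem_univ _, hvw, hvy0, hvnw⟩
    have hsum1 : ∑ p ∈ Px, T.len p = T.hgt z - T.hgt u := T.path_sum huz
    have hsum2 : ∑ p ∈ Pw, T.len p = T.hgt y0 - T.hgt w := T.path_sum hwy
    have hlow : ∑ v ∈ FA \ FY, T.len v ≤ ∑ p ∈ Pw, T.len p := by
      apply Finset.sum_le_sum_of_subset_of_nonneg hPwsub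
      intro p hp _
      rw [hPw, Finset.mem_filter] at hp
      exact le_of_lt (T.len_pos p (T.ne_root_of_strict_anc hp.2.1 hp.2.2.2))
    have hhigh : ∑ p ∈ Px, T.len p ≤ ∑ v ∈ FY \ FA, T.len v := by
      apply Finset.sum_le_sum_of_subset_of_nonneg hPxsub
      intro p hp _
      rw [Finset.mem_sdiff, hFY, Finset.mem_filter] at hp
      exact le_of_lt (T.len_pos p hp.1.2.1)
    have hkey : ∑ v ∈ FA \ FY, T.len v < ∑ v ∈ FY \ FA, T.len v := by
      calc ∑ v ∈ FA \ FY, T.len v ≤ T.hgt y0 - T.hgt w := by rw [← hsum2]; exact hlow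
        _ ≤ d := hwd
        _ < T.hgt z - T.hgt u := hud
        _ = ∑ p ∈ Px, T.len p := hsum1.symm
        _ ≤ ∑ v ∈ FY \ FA, T.len v := hhigh
    have hsplitA : ∑ v ∈ FA ∩ FY, T.len v + ∑ v ∈ FA \ FY, T.len v = ∑ v ∈ FA, T.len v :=
      Finset.sum_inter_add_sum_sdiff FA FY T.len
    have hsplitY : ∑ v ∈ FY ∩ FA, T.len v + ∑ v ∈ FY \ FA, T.len v = ∑ v ∈ FY, T.len v :=
      Finset.sum_inter_add_sum_sdiff FY FA T.len
    rw [hPDA, hPDY, ← hsplitA, ← hsplitY, Finset.inter_comm FY FA]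
    linarith
  rintro ⟨_, _, hmax⟩
  have := hmax Y hYsub hYcard
  linarith
end
end
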